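/- arXiv:2007.05567 — 2 statements merged into one kernel-verified Lean document; each statement's English description precedes it below -/
import Mathlib

section
/- Let S = ⟨a_1,…,a_n⟩ ⊆ ℤ^m ⊕ T be a reduced monoid and let S̃ = ⟨(a_1,1),…,(a_n,1)⟩ ⊆ ℤ^{m+1} ⊕ T. Then: (1) L_S = ∅ if and only if the lattice ideal I_{S̃} is the zero ideal; (2) if I_{S̃} ≠ 0 and {g_1,…,g_s} is a binomial generating set of I_{S̃}, then L_S = (deg_S(g_1) + S) ∪ ⋯ ∪ (deg_S(g_s) + S). -/
open MvPolynomial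

/-- The `S`-degree of an exponent vector. -/
def degS {n : ℕ} {G : Type*} [AddCommMonoid G] (a : Fin n → G) (lam : Fin n → ℕ) : G :=
  ∑ i, lam i • a i

/-- The lattice ideal of the monoid generated by `a`. -/
noncomputable def latticeIdeal (K : Type) [Field K] {n : ℕ} {G : Type*} [AddCommMonoid G]
    (a : Fin n → G) : Ideal (MvPolynomial (Fin n) K) :=
  Ideal.span {f | ∃ α β : Fin n →₀ ℕ, degS a ⇑α = degS a ⇑β ∧
    f = monomial α (1 : K) - monomial β 1}

/-- The set of elements of `S = ⟨a_1,…,a_n⟩` having at least two different factorizations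
of the same length. -/
def LSet {n : ℕ} {G : Type*} [AddCommMonoid G] (a : Fin n → G) : Set G :=
  {x | ∃ lam nu : Fin n → ℕ, lam ≠ nu ∧ degS a lam = x ∧ degS a nu = x ∧
    ∑ i, lam i = ∑ i, nu i}

section aux
variable {n : ℕ} {G : Type*} [AddCommMonoid G] (a : Fin n → G)

lemma degS_pair (α : Fin n → ℕ) :
    degS (fun j => ((a j, (1 : ℤ)) : G × ℤ)) α = (degS a α, (∑ i, α i : ℤ)) := by
  unfold degS
  rw [Prod.ext_iff]
  constructor
  · simp [Prod.fst_sum]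
  · simp [Prod.snd_sum]

lemma degS_add (α β : Fin n → ℕ) :
    degS a (fun i => α i + β i) = degS a α + degS a β := by
  simp [degS, add_smul, Finset.sum_add_distrib]

lemma degS_mem_closure (μ : Fin n → ℕ) :
    degS a μ ∈ AddSubmonoid.closure (Set.range a) := by
  refine AddSubmonoid.sum_mem _ fun i _ => ?_
  have hai : a i ∈ AddSubmonoid.closure (Set.range a) :=
    AddSubmonoid.subset_closure (Set.mem_range_self i)
  exact nsmul_mem hai (μ i)

lemma exists_degS_of_mem_closure {x : G} (hx : x ∈ AddSubmonoid.closure (Set.range a)) :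
    ∃ μ : Fin n → ℕ, x = degS a μ := by
  induction hx using AddSubmonoid.closure_induction with
  | mem x hx =>
      obtain ⟨i, rfl⟩ := hx
      exact ⟨Pi.single i 1, by simp [degS, Pi.single_apply, ite_smul]⟩
  | zero => exact ⟨0, by simp [degS]⟩
  | add x y _ _ hx hy =>
      obtain ⟨μ, rfl⟩ := hx; obtain ⟨ν, rfl⟩ := hy
      exact ⟨fun i => μ i + ν i, (degS_add a μ ν).symm⟩

lemma binomial_ne_zero {K : Type} [Field K] {α β : Fin n →₀ ℕ} (h : α ≠ β) :
    (monomial α (1 : K) - monomial β 1 : MvPolynomial (Fin n) K) ≠ 0 := by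
  intro hc
  have := congrArg (coeff α) hc
  simp [coeff_monomial, Ne.symm h] at this

end aux

/-- **Proposition.** Let `S = ⟨a_1,…,a_n⟩ ⊆ ℤ^m ⊕ T` be a reduced monoid and
`S̃ = ⟨(a_1,1),…,(a_n,1)⟩`.  (1) `L_S = ∅` iff `I_{S̃} = 0`; (2) if `I_{S̃} ≠ 0`
and `{g_1,…,g_s}` is a binomial generating set of `I_{S̃}`, then
`L_S = (deg_S g_1 + S) ∪ ⋯ ∪ (deg_S g_s + S)`. -/
theorem LSet_eq_union_degS_add
    {m n : ℕ} {T : Type} [AddCommGroup T] [Fintype T]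
    (K : Type) [Field K]
    (a : Fin n → (Fin m → ℤ) × T)
    -- `S` is reduced:
    (hred : ∀ x, x ∈ AddSubmonoid.closure (Set.range a) →
      -x ∈ AddSubmonoid.closure (Set.range a) → x = 0)
    -- `a` is the minimal set of generators:
    (hmin : ∀ i, a i ∉ AddSubmonoid.closure (Set.range a \ {a i})) :
    (LSet a = ∅ ↔
      latticeIdeal K (fun i => ((a i, (1 : ℤ)) : ((Fin m → ℤ) × T) × ℤ)) = ⊥)
    ∧ (∀ (s : ℕ) (gα gβ : Fin s → (Fin n →₀ ℕ)),
        -- `g_i = x^{gα i} - x^{gβ i}` is a (nonzero) binomial of `I_{S̃}`,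
        -- with `S`-degree `deg_S(g_i) = degS a (gα i)`:
        (∀ i, gα i ≠ gβ i) →
        (∀ i, degS (fun j => ((a j, (1 : ℤ)) : ((Fin m → ℤ) × T) × ℤ)) ⇑(gα i) =
              degS (fun j => ((a j, (1 : ℤ)) : ((Fin m → ℤ) × T) × ℤ)) ⇑(gβ i)) →
        -- `{g_1,…,g_s}` generates `I_{S̃}`:
        Ideal.span (Set.range fun i => monomial (gα i) (1 : K) - monomial (gβ i) 1) =
          latticeIdeal K (fun j => ((a j, (1 : ℤ)) : ((Fin m → ℤ) × T) × ℤ)) →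
        latticeIdeal K (fun j => ((a j, (1 : ℤ)) : ((Fin m → ℤ) × T) × ℤ)) ≠ ⊥ →
        LSet a = {x | ∃ i : Fin s, ∃ y ∈ AddSubmonoid.closure (Set.range a),
          x = degS a ⇑(gα i) + y}) := by
  -- a helper to build binomial generators of the lattice ideal from LSet witnesses
  have hgen : ∀ lam nu : Fin n → ℕ, degS a lam = degS a nu → (∑ i, lam i = ∑ i, nu i) →
      (monomial (Finsupp.equivFunOnFinite.symm lam) (1 : K)
        - monomial (Finsupp.equivFunOnFinite.symm nu) 1)
      ∈ latticeIdeal K (fun j => ((a j, (1 : ℤ)) : ((Fin m → ℤ) × T) × ℤ)) := by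
    intro lam nu hd hs
    refine Ideal.subset_span ⟨_, _, ?_, rfl⟩
    rw [degS_pair, degS_pair]
    refine Prod.ext (by exact hd) ?_
    show ∑ i, ((lam i : ℕ) : ℤ) = ∑ i, ((nu i : ℕ) : ℤ)
    rw [← Nat.cast_sum, ← Nat.cast_sum]
    exact_mod_cast hs
  constructor
  · constructor
    · intro hL
      rw [latticeIdeal, Ideal.span_eq_bot]
      rintro f ⟨α, β, hdeg, rfl⟩
      rw [degS_pair, degS_pair, Prod.mk.injEq] at hdeg
      have hαβ : (⇑α : Fin n → ℕ) = ⇑β := by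
        by_contra hne
        have hx : degS a ⇑α ∈ LSet a :=
          ⟨⇑α, ⇑β, hne, rfl, hdeg.1.symm, by exact_mod_cast hdeg.2⟩
        simp [hL] at hx
      rw [DFunLike.coe_injective hαβ, sub_self]
    · intro hI
      rw [Set.eq_empty_iff_forall_notMem]
      rintro x ⟨lam, nu, hne, hl, hn, hsum⟩
      have hmem := hgen lam nu (hl.trans hn.symm) hsum
      rw [hI, Ideal.mem_bot] at hmem
      refine binomial_ne_zero (fun h => hne ?_) hmem
      have := congrArg (⇑· : (Fin n →₀ ℕ) → Fin n → ℕ) h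
      simpa using this
  · intro s gα gβ hne hdeg hspan hI
    have hpair : ∀ i, degS a ⇑(gα i) = degS a ⇑(gβ i) ∧
        (∑ j, gα i j : ℕ) = ∑ j, gβ i j := by
      intro i
      have h := hdeg i
      rw [degS_pair, degS_pair, Prod.mk.injEq] at h
      exact ⟨h.1, by exact_mod_cast h.2⟩
    ext x
    simp only [Set.mem_setOf_eq]
    constructor
    · rintro ⟨lam, nu, hlamnu, hl, hn, hsum⟩
      set lamF := Finsupp.equivFunOnFinite.symm lam with hlamF
      set nuF := Finsupp.equivFunOnFinite.symm nu with hnuF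
      have hlamFc : ⇑lamF = lam := rfl
      have hmem := hgen lam nu (hl.trans hn.symm) hsum
      rw [← hspan, Ideal.mem_span_range_iff_exists_fun] at hmem
      obtain ⟨c, hc⟩ := hmem
      have hFne : lamF ≠ nuF := fun h => hlamnu (by
        have := congrArg (⇑· : (Fin n →₀ ℕ) → Fin n → ℕ) h
        simpa [lamF, nuF] using this)
      have hco : coeff lamF (∑ i, c i * (monomial (gα i) (1 : K) - monomial (gβ i) 1)) = 1 := by
        rw [hc]
        simp [coeff_sub, coeff_monomial, Ne.symm hFne, ← hlamF, ← hnuF]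
      have hex : ∃ i, coeff lamF (c i * (monomial (gα i) (1 : K) - monomial (gβ i) 1)) ≠ 0 := by
        by_contra h
        push_neg at h
        rw [coeff_sum] at hco
        simp [h] at hco
      obtain ⟨i, hi⟩ := hex
      have hcases : gα i ≤ lamF ∨ gβ i ≤ lamF := by
        have h2 : coeff lamF (c i * monomial (gα i) (1 : K)) ≠ 0 ∨
            coeff lamF (c i * monomial (gβ i) (1 : K)) ≠ 0 := by
          by_contra h
          push_neg at h
          apply hi
          rw [mul_sub, coeff_sub, h.1, h.2, sub_zero]
        rcases h2 with h2 | h2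
        · left
          rw [coeff_mul_monomial'] at h2
          by_contra hle; simp [hle] at h2
        · right
          rw [coeff_mul_monomial'] at h2
          by_contra hle; simp [hle] at h2
      have hxlam : x = degS a ⇑lamF := by rw [hlamFc]; exact hl.symm
      rcases hcases with hle | hle
      · refine ⟨i, degS a ⇑(lamF - gα i), degS_mem_closure a _, ?_⟩
        have hcoe : ⇑(gα i + (lamF - gα i)) = fun j => gα i j + (lamF - gα i) j := by
          funext j; simp
        have hkey : degS a ⇑lamF = degS a ⇑(gα i) + degS a ⇑(lamF - gα i) := by
          conv_lhs => rw [← add_tsub_cancel_of_le hle]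
          rw [hcoe, degS_add]
        rw [hxlam, hkey]
      · refine ⟨i, degS a ⇑(lamF - gβ i), degS_mem_closure a _, ?_⟩
        have hcoe : ⇑(gβ i + (lamF - gβ i)) = fun j => gβ i j + (lamF - gβ i) j := by
          funext j; simp
        have hkey : degS a ⇑lamF = degS a ⇑(gα i) + degS a ⇑(lamF - gβ i) := by
          conv_lhs => rw [← add_tsub_cancel_of_le hle]
          rw [hcoe, degS_add, (hpair i).1]
        rw [hxlam, hkey]
    · rintro ⟨i, y, hy, rfl⟩
      obtain ⟨μ, rfl⟩ := exists_degS_of_mem_closure a hy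
      refine ⟨fun j => gα i j + μ j, fun j => gβ i j + μ j, ?_, degS_add a _ _, ?_, ?_⟩
      · intro h
        apply hne i
        apply DFunLike.coe_injective
        funext j
        have := congrFun h j
        simpa using Nat.add_right_cancel this
      · rw [degS_add, (hpair i).1]
      · rw [Finset.sum_add_distrib, Finset.sum_add_distrib, (hpair i).2]
end

section
/- Let S = ⟨a_1,…,a_n⟩ ⊆ ℕ be a numerical semigroup given by its minimal set of generators. Then: (1) L_S = ∅ if and only if n ≤ 2; (2) if n = 3, then L_S = ( a_2 (a_3 − a_1) / gcd(a_2 − a_1, a_3 − a_1) ) + S. -/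
lemma degS_nat {n : ℕ} (a lam : Fin n → ℕ) : degS a lam = ∑ i, lam i * a i := by
  simp [degS, smul_eq_mul]

lemma degS_add_s10 {n : ℕ} (a l m : Fin n → ℕ) : degS a (l + m) = degS a l + degS a m := by
  simp [degS_nat, add_mul, Finset.sum_add_distrib]

lemma degS_single {n : ℕ} (a : Fin n → ℕ) (i : Fin n) (c : ℕ) :
    degS a (Pi.single i c) = c * a i := by
  simp [degS_nat, Pi.single_apply, ite_mul]

lemma sum_single {n : ℕ} (i : Fin n) (c : ℕ) : ∑ j, Pi.single i c j = c := by
  simp [Pi.single_apply]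

lemma mem_closure_iff_degS {n : ℕ} (a : Fin n → ℕ) (y : ℕ) :
    y ∈ AddSubmonoid.closure (Set.range a) ↔ ∃ mu : Fin n → ℕ, degS a mu = y := by
  constructor
  · intro h
    induction h using AddSubmonoid.closure_induction with
    | mem x hx => obtain ⟨i, rfl⟩ := hx; exact ⟨Pi.single i 1, by simp [degS_single]⟩
    | zero => exact ⟨0, by simp [degS_nat]⟩
    | add x y _ _ hx hy =>
        obtain ⟨l, rfl⟩ := hx; obtain ⟨m, rfl⟩ := hy
        exact ⟨l + m, degS_add_s10 a l m⟩
  · rintro ⟨mu, rfl⟩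
    exact AddSubmonoid.sum_mem _ fun i _ =>
      nsmul_mem (AddSubmonoid.subset_closure (Set.mem_range_self i)) _

lemma key_id (a0 a1 a2 v u g : ℕ) (h1 : a1 = a0 + v * g) (h2 : a2 = a0 + u * g) (hvu : v ≤ u) :
    u * a1 = (u - v) * a0 + v * a2 := by
  obtain ⟨w, rfl⟩ : ∃ w, u = v + w := ⟨u - v, by omega⟩
  subst h1 h2
  have hw : v + w - v = w := by omega
  rw [hw]; ring

lemma two_gen_aux (a0 a1 l0 l1 m0 m1 : ℕ) (h : a0 < a1)
    (hd : l0 * a0 + l1 * a1 = m0 * a0 + m1 * a1) (hs : l0 + l1 = m0 + m1) (hle : l0 ≤ m0) :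
    l0 = m0 := by
  by_contra hne
  have hlt : l0 < m0 := by omega
  obtain ⟨s, hs0, h1⟩ : ∃ s, 0 < s ∧ m0 = l0 + s := ⟨m0 - l0, by omega, by omega⟩
  have h2 : l1 = m1 + s := by omega
  rw [h1, h2] at hd
  have hsa : s * a0 < s * a1 := mul_lt_mul_of_pos_left h hs0
  nlinarith [hd, hsa]

lemma three_gen_core (a0 a1 a2 l0 l1 l2 m0 m1 m2 : ℕ)
    (h01 : a0 < a1) (h12 : a1 < a2)
    (hdeg : l0 * a0 + l1 * a1 + l2 * a2 = m0 * a0 + m1 * a1 + m2 * a2)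
    (hsum : l0 + l1 + l2 = m0 + m1 + m2)
    (hne : ¬(l0 = m0 ∧ l1 = m1 ∧ l2 = m2))
    (hle : m1 ≤ l1) :
    (a2 - a0) / Nat.gcd (a1 - a0) (a2 - a0) ≤ l1 := by
  set d1 := a1 - a0 with hd1def
  set d2 := a2 - a0 with hd2def
  set g := Nat.gcd d1 d2 with hgdef
  have hd1 : 0 < d1 := by omega
  have hd2 : 0 < d2 := by omega
  have hg : 0 < g := Nat.gcd_pos_of_pos_left _ hd1
  set v := d1 / g with hvdef
  set u := d2 / g with hudef
  have hvg : v * g = d1 := Nat.div_mul_cancel (Nat.gcd_dvd_left _ _)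
  have hug : u * g = d2 := Nat.div_mul_cancel (Nat.gcd_dvd_right _ _)
  have hv : 0 < v := Nat.div_pos (Nat.le_of_dvd hd1 (Nat.gcd_dvd_left _ _)) hg
  have hu : 0 < u := Nat.div_pos (Nat.le_of_dvd hd2 (Nat.gcd_dvd_right _ _)) hg
  have ha1 : a1 = a0 + v * g := by omega
  have ha2 : a2 = a0 + u * g := by omega
  have h1 : (l0 + l1 + l2) * a0 + (l1 * v + l2 * u) * g
      = (m0 + m1 + m2) * a0 + (m1 * v + m2 * u) * g := by
    have e1 : (l0 + l1 + l2) * a0 + (l1 * v + l2 * u) * g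
        = l0 * a0 + l1 * (a0 + v * g) + l2 * (a0 + u * g) := by ring
    have e2 : (m0 + m1 + m2) * a0 + (m1 * v + m2 * u) * g
        = m0 * a0 + m1 * (a0 + v * g) + m2 * (a0 + u * g) := by ring
    rw [e1, e2, ← ha1, ← ha2]; exact hdeg
  rw [hsum] at h1
  have E : l1 * v + l2 * u = m1 * v + m2 * u :=
    Nat.eq_of_mul_eq_mul_right hg (Nat.add_left_cancel h1)
  have hl2 : l2 ≤ m2 := by
    by_contra hc
    push_neg at hc
    have h2 : m2 * u < l2 * u := mul_lt_mul_of_pos_right hc hu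
    have h3 : m1 * v ≤ l1 * v := Nat.mul_le_mul_right v hle
    linarith
  obtain ⟨s, hls⟩ : ∃ s, l1 = m1 + s := ⟨l1 - m1, by omega⟩
  obtain ⟨t, hmt⟩ : ∃ t, m2 = l2 + t := ⟨m2 - l2, by omega⟩
  have hst : s * v = t * u := by
    rw [hls, hmt] at E
    linarith [E]
  have hco : Nat.Coprime v u := Nat.coprime_div_gcd_div_gcd hg
  have hdvd : u ∣ s := hco.symm.dvd_of_dvd_mul_right ⟨t, by rw [hst]; ring⟩
  obtain ⟨m, hm⟩ := hdvd
  rcases Nat.eq_zero_or_pos m with rfl | hmpos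
  · exfalso
    have hs0 : s = 0 := by omega
    have ht0 : t = 0 := by
      have h4 : t * u = 0 := by rw [← hst, hs0]; ring
      rcases Nat.mul_eq_zero.mp h4 with h | h <;> omega
    exact hne ⟨by omega, by omega, by omega⟩
  · have h5 : u ≤ u * m := Nat.le_mul_of_pos_right u hmpos
    linarith

lemma mem_LSet_of_three {n : ℕ} (a : Fin n → ℕ) (i0 i1 i2 : Fin n)
    (hne01 : i0 ≠ i1) (hne12 : i1 ≠ i2)
    (h01 : a i0 < a i1) (h12 : a i1 < a i2) :
    a i1 * ((a i2 - a i0) / Nat.gcd (a i1 - a i0) (a i2 - a i0)) ∈ LSet a := by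
  set d1 := a i1 - a i0 with hd1def
  set d2 := a i2 - a i0 with hd2def
  set g := Nat.gcd d1 d2 with hgdef
  have hd1 : 0 < d1 := by omega
  have hd2 : 0 < d2 := by omega
  have hg : 0 < g := Nat.gcd_pos_of_pos_left _ hd1
  set v := d1 / g with hvdef
  set u := d2 / g with hudef
  have hvg : v * g = d1 := Nat.div_mul_cancel (Nat.gcd_dvd_left _ _)
  have hug : u * g = d2 := Nat.div_mul_cancel (Nat.gcd_dvd_right _ _)
  have hv : 0 < v := Nat.div_pos (Nat.le_of_dvd hd1 (Nat.gcd_dvd_left _ _)) hg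
  have hu : 0 < u := Nat.div_pos (Nat.le_of_dvd hd2 (Nat.gcd_dvd_right _ _)) hg
  have hvu : v ≤ u := Nat.div_le_div_right (by omega)
  have ha1 : a i1 = a i0 + v * g := by omega
  have ha2 : a i2 = a i0 + u * g := by omega
  have hid : u * a i1 = (u - v) * a i0 + v * a i2 := key_id _ _ _ v u g ha1 ha2 hvu
  refine ⟨Pi.single i1 u, Pi.single i0 (u - v) + Pi.single i2 v, ?_, ?_, ?_, ?_⟩
  · intro h
    have h2 := congrFun h i1
    rw [Pi.single_eq_same, Pi.add_apply, Pi.single_eq_of_ne hne01.symm,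
      Pi.single_eq_of_ne hne12] at h2
    omega
  · rw [degS_single, mul_comm]
  · rw [degS_add_s10, degS_single, degS_single, ← hid, mul_comm]
  · rw [sum_single]
    simp only [Pi.add_apply]
    rw [Finset.sum_add_distrib, sum_single, sum_single]
    omega

/-- **Corollary.** Let `S = ⟨a_1,…,a_n⟩ ⊆ ℕ` be a numerical semigroup given by its
minimal set of generators `a_1 < ⋯ < a_n`.
(1) `L_S = ∅` iff `n ≤ 2`;
(2) if `n = 3`, then `L_S = (a_2 (a_3 - a_1) / gcd(a_2 - a_1, a_3 - a_1)) + S`. -/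
theorem LSet_numerical_two_three_generators
    {n : ℕ} (a : Fin n → ℕ)
    -- generators are listed increasingly:
    (hmono : StrictMono a)
    -- `S = ⟨a_1,…,a_n⟩` is a numerical semigroup, i.e. `ℕ \ S` is finite:
    (hfin : {x : ℕ | x ∉ AddSubmonoid.closure (Set.range a)}.Finite)
    -- `{a_1,…,a_n}` is the minimal set of generators:
    (hmin : ∀ i, a i ∉ AddSubmonoid.closure (Set.range a \ {a i})) :
    (LSet a = ∅ ↔ n ≤ 2)
    ∧ (∀ h3 : n = 3,
        LSet a = {x | ∃ y ∈ AddSubmonoid.closure (Set.range a),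
          x = a ⟨1, by omega⟩ * ((a ⟨2, by omega⟩ - a ⟨0, by omega⟩) /
            Nat.gcd (a ⟨1, by omega⟩ - a ⟨0, by omega⟩) (a ⟨2, by omega⟩ - a ⟨0, by omega⟩))
            + y}) := by
  constructor
  · constructor
    · -- LSet a = ∅ → n ≤ 2
      intro hemp
      by_contra hn
      push_neg at hn
      have h3 : 3 ≤ n := hn
      have hmem := mem_LSet_of_three a ⟨0, by omega⟩ ⟨1, by omega⟩ ⟨2, by omega⟩
        (by simp) (by simp)
        (hmono (Fin.mk_lt_mk.mpr (by omega))) (hmono (Fin.mk_lt_mk.mpr (by omega)))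
      rw [hemp] at hmem
      exact hmem
    · -- n ≤ 2 → LSet a = ∅
      intro hn
      apply Set.eq_empty_iff_forall_notMem.mpr
      rintro x ⟨lam, nu, hne, hl, hm, hs⟩
      apply hne
      have hd : degS a lam = degS a nu := hl.trans hm.symm
      interval_cases n
      · funext i; exact i.elim0
      · funext i
        fin_cases i
        simpa [Fin.sum_univ_one] using hs
      · rw [degS_nat, degS_nat, Fin.sum_univ_two] at hd
        rw [Fin.sum_univ_two, Fin.sum_univ_two] at hs
        have h01 : a 0 < a 1 := hmono (by decide)
        have h0 : lam 0 = nu 0 := by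
          rcases le_total (lam 0) (nu 0) with h | h
          · exact two_gen_aux _ _ _ _ _ _ h01 hd hs h
          · exact (two_gen_aux _ _ _ _ _ _ h01 hd.symm hs.symm h).symm
        funext i
        fin_cases i
        · exact h0
        · show lam 1 = nu 1
          omega
  · intro h3
    subst h3
    have h01 : a 0 < a 1 := hmono (by decide)
    have h12 : a 1 < a 2 := hmono (by decide)
    show LSet a = {x | ∃ y ∈ AddSubmonoid.closure (Set.range a),
      x = a 1 * ((a 2 - a 0) / Nat.gcd (a 1 - a 0) (a 2 - a 0)) + y}
    set u := (a 2 - a 0) / Nat.gcd (a 1 - a 0) (a 2 - a 0) with hu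
    ext x
    simp only [Set.mem_setOf_eq]
    constructor
    · rintro ⟨lam, nu, hne, hl, hm, hs⟩
      rw [degS_nat, Fin.sum_univ_three] at hl hm
      rw [Fin.sum_univ_three, Fin.sum_univ_three] at hs
      have hne' : ¬(lam 0 = nu 0 ∧ lam 1 = nu 1 ∧ lam 2 = nu 2) := by
        rintro ⟨e0, e1, e2⟩
        apply hne
        funext i
        fin_cases i <;> assumption
      have hd : lam 0 * a 0 + lam 1 * a 1 + lam 2 * a 2
          = nu 0 * a 0 + nu 1 * a 1 + nu 2 * a 2 := hl.trans hm.symm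
      rcases le_total (nu 1) (lam 1) with hle | hle
      · have hkey := three_gen_core (a 0) (a 1) (a 2) (lam 0) (lam 1) (lam 2)
          (nu 0) (nu 1) (nu 2) h01 h12 hd hs hne' hle
        rw [← hu] at hkey
        obtain ⟨r, hr⟩ : ∃ r, lam 1 = u + r := ⟨lam 1 - u, by omega⟩
        refine ⟨lam 0 * a 0 + r * a 1 + lam 2 * a 2, ?_, ?_⟩
        · exact (mem_closure_iff_degS a _).mpr
            ⟨![lam 0, r, lam 2], by rw [degS_nat, Fin.sum_univ_three]; simp⟩
        · rw [← hl, hr]; ring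
      · have hne'' : ¬(nu 0 = lam 0 ∧ nu 1 = lam 1 ∧ nu 2 = lam 2) := by
          rintro ⟨e0, e1, e2⟩
          exact hne' ⟨e0.symm, e1.symm, e2.symm⟩
        have hkey := three_gen_core (a 0) (a 1) (a 2) (nu 0) (nu 1) (nu 2)
          (lam 0) (lam 1) (lam 2) h01 h12 hd.symm hs.symm hne'' hle
        rw [← hu] at hkey
        obtain ⟨r, hr⟩ : ∃ r, nu 1 = u + r := ⟨nu 1 - u, by omega⟩
        refine ⟨nu 0 * a 0 + r * a 1 + nu 2 * a 2, ?_, ?_⟩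
        · exact (mem_closure_iff_degS a _).mpr
            ⟨![nu 0, r, nu 2], by rw [degS_nat, Fin.sum_univ_three]; simp⟩
        · rw [← hm, hr]; ring
    · rintro ⟨y, hy, rfl⟩
      obtain ⟨mu, rfl⟩ := (mem_closure_iff_degS a y).mp hy
      have hc : a 1 * u ∈ LSet a :=
        mem_LSet_of_three a 0 1 2 (by decide) (by decide) h01 h12
      obtain ⟨lam, nu, hne, hl, hm, hs⟩ := hc
      refine ⟨lam + mu, nu + mu, ?_, ?_, ?_, ?_⟩
      · intro h
        apply hne
        funext i
        have h2 := congrFun h i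
        simp only [Pi.add_apply] at h2
        omega
      · rw [degS_add_s10, hl]
      · rw [degS_add_s10, hm]
      · simp only [Pi.add_apply]
        rw [Finset.sum_add_distrib, Finset.sum_add_distrib, hs]
end
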